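/- Let 𝒜 be a locally finite L-structure and ℬ an L'-structure every finitely generated substructure of which is rigid, and suppose 𝒜 is a semi-retract of ℬ via (g, f). Let A be a finite substructure of 𝒜 and let A' = ⟨g(A)⟩_ℬ be the substructure of ℬ generated by g(A). If d ≥ 1 is an integer such that ℬ → (B₀)^{A'}_{r,d} for every finitely generated substructure B₀ of ℬ and every integer r ≥ 2, then 𝒜 → (B)^A_{r,d} for every finite substructure B of 𝒜 and every integer r ≥ 2; that is, if A' has finite Ramsey degree d in ℬ then A has finite Ramsey degree at most d in 𝒜. -/
import Mathlib


open FirstOrder FirstOrder.Language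
open Set

/-- Two same-length tuples have the same quantifier-free type over ∅. -/
def SameQfType (L : FirstOrder.Language) (M : Type*) [L.Structure M] {n : ℕ}
    (x y : Fin n → M) : Prop :=
  ∀ φ : L.Formula (Fin n), φ.IsQF → (φ.Realize x ↔ φ.Realize y)

/-- A qftp-respecting injection between structures in possibly different languages. -/
def QftpRespecting (L L' : FirstOrder.Language) (M N : Type*) [L.Structure M] [L'.Structure N]
    (h : M → N) : Prop :=
  Function.Injective h ∧
    ∀ (n : ℕ) (x y : Fin n → M), SameQfType L M x y → SameQfType L' N (h ∘ x) (h ∘ y)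

/-- `(g, f)` is a semi-retraction between `M` and `N`: both maps are qftp-respecting
injections and `f ∘ g` is qftp-preserving (equivalently, an `L`-embedding of `M` into `M`). -/
def IsSemiRetraction (L L' : FirstOrder.Language) (M N : Type*)
    [L.Structure M] [L'.Structure N] (g : M → N) (f : N → M) : Prop :=
  QftpRespecting L L' M N g ∧ QftpRespecting L' L N M f ∧
    ∀ (n : ℕ) (x : Fin n → M), SameQfType L M x (f ∘ g ∘ x)

/-- `M` is locally finite: every finitely generated substructure is finite. -/
def StructLocallyFinite (L : FirstOrder.Language) (M : Type*) [L.Structure M] : Prop :=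
  ∀ S : L.Substructure M, S.FG → (S : Set M).Finite

/-- `M → (B)^A_{r,d}` for substructures. -/
def ArrowSub (L : FirstOrder.Language) (M : Type*) [L.Structure M]
    (A B : L.Substructure M) (r d : ℕ) : Prop :=
  ∀ c : L.Substructure M → Fin r, ∃ B' : L.Substructure M,
    Nonempty (B' ≃[L] B) ∧
      (c '' {A' : L.Substructure M | A' ≤ B' ∧ Nonempty (A' ≃[L] A)}).ncard ≤ d

/-- `M →ᵉ (B)^A_{r,d}` for embeddings. -/
def ArrowEmb (L : FirstOrder.Language) (M : Type*) [L.Structure M]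
    (A B : L.Substructure M) (r d : ℕ) : Prop :=
  ∀ c : (A ↪[L] M) → Fin r, ∃ h : B ↪[L] M,
    (c '' {j : A ↪[L] M | ∃ e : A ↪[L] B, j = h.comp e}).ncard ≤ d

/-- A structure is rigid if its only automorphism is the identity. -/
def IsRigidStructure (L : FirstOrder.Language) (M : Type*) [L.Structure M] : Prop :=
  ∀ σ : M ≃[L] M, ∀ x : M, σ x = x


section Aux

variable {L : FirstOrder.Language} {M : Type*} [L.Structure M] {n : ℕ}

theorem SameQfType.symm {x y : Fin n → M} (h : SameQfType L M x y) : SameQfType L M y x :=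
  fun φ hφ => (h φ hφ).symm

theorem SameQfType.trans {x y z : Fin n → M} (h : SameQfType L M x y)
    (h' : SameQfType L M y z) : SameQfType L M x z :=
  fun φ hφ => (h φ hφ).trans (h' φ hφ)

theorem SameQfType.precomp {m : ℕ} {x y : Fin n → M} (h : SameQfType L M x y)
    (k : Fin m → Fin n) : SameQfType L M (x ∘ k) (y ∘ k) := by
  intro φ hφ
  rw [← Formula.realize_relabel, ← Formula.realize_relabel]
  exact h (φ.relabel k) (hφ.relabel _)

theorem mem_closure_range_iff {x : Fin n → M} {a : M} :
    a ∈ Substructure.closure L (Set.range x) ↔ ∃ t : L.Term (Fin n), t.realize x = a := by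
  rw [Substructure.mem_closure_iff_exists_term]
  constructor
  · rintro ⟨t, rfl⟩
    refine ⟨t.relabel (Set.rangeSplitting x), ?_⟩
    rw [Term.realize_relabel]
    congr 1
    funext i
    exact Set.apply_rangeSplitting x i
  · rintro ⟨t, rfl⟩
    refine ⟨t.relabel fun i => ⟨x i, Set.mem_range_self i⟩, ?_⟩
    rw [Term.realize_relabel]
    rfl

theorem term_realize_mem_closure_range (x : Fin n → M) (t : L.Term (Fin n)) :
    t.realize x ∈ Substructure.closure L (Set.range x) :=
  mem_closure_range_iff.2 ⟨t, rfl⟩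

theorem SameQfType.term_eq {x y : Fin n → M} (h : SameQfType L M x y)
    {t t' : L.Term (Fin n)} (ht : t.realize x = t'.realize x) :
    t.realize y = t'.realize y := by
  have hqf : (t.equal t').IsQF := (BoundedFormula.IsAtomic.equal _ _).isQF
  have := (h _ hqf).1 (by simpa using ht)
  simpa using this

theorem SameQfType.rel_iff {x y : Fin n → M} (h : SameQfType L M x y)
    {k : ℕ} (R : L.Relations k) (ts : Fin k → L.Term (Fin n)) :
    Structure.RelMap R (fun i => (ts i).realize x) ↔ Structure.RelMap R (fun i => (ts i).realize y) := by
  have hqf : (R.formula ts).IsQF := (BoundedFormula.IsAtomic.rel _ _).isQF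
  have := h _ hqf
  simpa using this

end Aux

section Aux2

variable {L : FirstOrder.Language} {M : Type*} [L.Structure M] {n : ℕ}

theorem realize_qf_embedding_bd {N : Type*} [L.Structure N] (j : M ↪[L] N) {α : Type*} {k : ℕ}
    {φ : L.BoundedFormula α k} (hφ : φ.IsQF) :
    ∀ (v : α → M) (xs : Fin k → M), φ.Realize (j ∘ v) (j ∘ xs) ↔ φ.Realize v xs := by
  induction hφ with
  | falsum => intro v xs; exact Iff.rfl
  | of_isAtomic h =>
    cases h with
    | equal t₁ t₂ =>
      intro v xs
      simp only [BoundedFormula.realize_bdEqual, ← Sum.comp_elim, HomClass.realize_term]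
      exact j.injective.eq_iff
    | rel R ts =>
      intro v xs
      simp only [BoundedFormula.realize_rel, ← Sum.comp_elim, HomClass.realize_term]
      exact StrongHomClass.map_rel j R _
  | imp h₁ h₂ ih₁ ih₂ =>
    intro v xs
    simp only [BoundedFormula.realize_imp, ih₁ v xs, ih₂ v xs]

theorem realize_qf_embedding {N : Type*} [L.Structure N] (j : M ↪[L] N)
    {φ : L.Formula (Fin n)} (hφ : φ.IsQF) (v : Fin n → M) :
    φ.Realize (j ∘ v) ↔ φ.Realize v := by
  have h := realize_qf_embedding_bd j hφ v default
  have hd : (j ∘ (default : Fin 0 → M)) = default := Subsingleton.elim _ _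
  rw [hd] at h
  exact h

theorem sqt_subtype_equiv {S T : L.Substructure M} (e : S ≃[L] T) (u : Fin n → S) :
    SameQfType L M (S.subtype ∘ u) (T.subtype ∘ (e.toEmbedding ∘ u)) := by
  intro φ hφ
  rw [realize_qf_embedding S.subtype hφ, realize_qf_embedding T.subtype hφ,
      realize_qf_embedding e.toEmbedding hφ]

noncomputable def sqtFun {x : Fin n → M} (y : Fin n → M)
    (a : Substructure.closure L (Set.range x)) : M :=
  (mem_closure_range_iff.1 a.2).choose.realize y

theorem sqtFun_mem {x : Fin n → M} (y : Fin n → M)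
    (a : Substructure.closure L (Set.range x)) :
    sqtFun y a ∈ Substructure.closure L (Set.range y) :=
  term_realize_mem_closure_range y _

theorem sqtFun_spec {x y : Fin n → M} (h : SameQfType L M x y)
    (a : Substructure.closure L (Set.range x)) (t : L.Term (Fin n))
    (ht : t.realize x = ↑a) : sqtFun y a = t.realize y :=
  h.term_eq ((mem_closure_range_iff.1 a.2).choose_spec.trans ht.symm)

/-- The isomorphism between substructures generated by two tuples with the same qf type. -/
noncomputable def closureEquivOfSQT {x y : Fin n → M} (h : SameQfType L M x y) :
    Substructure.closure L (Set.range x) ≃[L] Substructure.closure L (Set.range y) where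
  toEquiv :=
  { toFun := fun a => ⟨sqtFun y a, sqtFun_mem y a⟩
    invFun := fun b => ⟨sqtFun x b, sqtFun_mem x b⟩
    left_inv := fun a => Subtype.ext <|
      (sqtFun_spec h.symm _ (mem_closure_range_iff.1 a.2).choose rfl).trans
        (mem_closure_range_iff.1 a.2).choose_spec
    right_inv := fun b => Subtype.ext <|
      (sqtFun_spec h _ (mem_closure_range_iff.1 b.2).choose rfl).trans
        (mem_closure_range_iff.1 b.2).choose_spec }
  map_fun' := by
    intro k F as
    refine Subtype.ext ?_
    refine (sqtFun_spec h _ (Term.func F fun i => (mem_closure_range_iff.1 (as i).2).choose)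
      ?_).trans ?_
    · show Structure.funMap F
          (fun i => Term.realize x (mem_closure_range_iff.1 (as i).2).choose) =
        Structure.funMap F (fun i => ((as i : M)))
      exact congrArg _ (funext fun i => (mem_closure_range_iff.1 (as i).2).choose_spec)
    · rfl
  map_rel' := by
    intro k R as
    show Structure.RelMap R (fun i =>
        Term.realize y (mem_closure_range_iff.1 (as i).2).choose) ↔
      Structure.RelMap R (fun i => ((as i : M)))
    have hx : (fun i => ((as i : M))) =
        fun i => Term.realize x (mem_closure_range_iff.1 (as i).2).choose :=
      funext fun i => ((mem_closure_range_iff.1 (as i).2).choose_spec).symm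
    rw [hx]
    exact (h.rel_iff R _).symm

theorem closureEquivOfSQT_coe {x y : Fin n → M} (h : SameQfType L M x y)
    (a : Substructure.closure L (Set.range x)) (t : L.Term (Fin n))
    (ht : t.realize x = ↑a) :
    ((closureEquivOfSQT h a : Substructure.closure L (Set.range y)) : M) = t.realize y :=
  sqtFun_spec h a t ht

/-- Transport a substructure along an equality, as an `L`-equivalence. -/
def substructureEquivOfEq {S T : L.Substructure M} (h : S = T) : S ≃[L] T where
  toEquiv :=
  { toFun := fun a => ⟨a, h ▸ a.2⟩
    invFun := fun b => ⟨b, h.symm ▸ b.2⟩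
    left_inv := fun _ => rfl
    right_inv := fun _ => rfl }
  map_fun' := fun F x => Subtype.ext rfl
  map_rel' := fun R x => Iff.rfl

theorem substructureEquivOfEq_coe {S T : L.Substructure M} (h : S = T) (a : S) :
    ((substructureEquivOfEq h a : T) : M) = ↑a := rfl

end Aux2

section Aux3

variable {L : FirstOrder.Language} {M : Type*} [L.Structure M] {n : ℕ}

theorem closure_range_map {S T : L.Substructure M} (e : S ≃[L] T) (u : Fin n → S)
    (hu : Substructure.closure L (Set.range (S.subtype ∘ u)) = S) :
    Substructure.closure L (Set.range (T.subtype ∘ (e.toEmbedding ∘ u))) = T := by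
  apply le_antisymm
  · rw [Substructure.closure_le]
    rintro _ ⟨i, rfl⟩
    exact (e (u i)).2
  · intro t ht
    have hmem : ((e.symm ⟨t, ht⟩ : S) : M) ∈
        Substructure.closure L (Set.range (S.subtype ∘ u)) := by
      rw [hu]; exact (e.symm ⟨t, ht⟩).2
    obtain ⟨tm, htm⟩ := mem_closure_range_iff.1 hmem
    have h1 : S.subtype (tm.realize u) = S.subtype (e.symm ⟨t, ht⟩) := by
      rw [← HomClass.realize_term S.subtype]; exact htm
    have h2 : tm.realize u = e.symm ⟨t, ht⟩ := S.subtype.injective h1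
    have h3 : e (tm.realize u) = ⟨t, ht⟩ := by rw [h2]; exact e.apply_symm_apply _
    have h4 : tm.realize (T.subtype ∘ (e.toEmbedding ∘ u)) = t := by
      have := HomClass.realize_term (t := tm) (v := e.toEmbedding ∘ u) T.subtype
      rw [this]
      have h5 : tm.realize (e.toEmbedding ∘ u) = e.toEmbedding (tm.realize u) :=
        HomClass.realize_term e.toEmbedding
      rw [h5]
      show ((e (tm.realize u) : T) : M) = t
      rw [h3]
    exact h4 ▸ term_realize_mem_closure_range _ tm

theorem tuple_eq_of_sqt_of_rigid
    (hr : ∀ S : L.Substructure M, S.FG → IsRigidStructure L S)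
    {x y : Fin n → M} (h : SameQfType L M x y)
    (hc : Substructure.closure L (Set.range x) = Substructure.closure L (Set.range y)) :
    x = y := by
  funext i
  have hx : x i ∈ Substructure.closure L (Set.range x) :=
    Substructure.subset_closure (Set.mem_range_self i)
  have hfix := hr _ (Substructure.fg_closure (Set.finite_range x))
    ((substructureEquivOfEq hc.symm).comp (closureEquivOfSQT h)) ⟨x i, hx⟩
  have h2 : ((((substructureEquivOfEq hc.symm).comp (closureEquivOfSQT h)) ⟨x i, hx⟩ :
      Substructure.closure L (Set.range x)) : M) = y i := by
    show ((substructureEquivOfEq hc.symm (closureEquivOfSQT h ⟨x i, hx⟩) :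
      Substructure.closure L (Set.range x)) : M) = y i
    rw [substructureEquivOfEq_coe]
    exact closureEquivOfSQT_coe h _ (Term.var i) rfl
  exact (congrArg Subtype.val hfix).symm.trans h2
end Aux3

/-- Corollary 5.3 / `cor_fmla_free_degrees`: if `𝒜` is a locally finite
semi-retract of `ℬ` via `(g, f)`, every finitely generated substructure of `ℬ` is rigid, and
`A' = ⟨g(A)⟩_ℬ` has Ramsey degree at most `d` in `ℬ`, then the finite substructure `A` has
Ramsey degree at most `d` in `𝒜`. -/
theorem semiRetraction_transfers_Ramsey_degree_of_rigid
    {L L' : FirstOrder.Language} {M N : Type*} [L.Structure M] [L'.Structure N]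
    (g : M → N) (f : N → M)
    (hlf : StructLocallyFinite L M)
    (hrigid : ∀ S : L'.Substructure N, S.FG → IsRigidStructure L' S)
    (hsr : IsSemiRetraction L L' M N g f)
    (A : L.Substructure M) (hAfin : (A : Set M).Finite)
    (d : ℕ) (hd : 1 ≤ d)
    (hdeg : ∀ B₀ : L'.Substructure N, B₀.FG → ∀ r : ℕ, 2 ≤ r →
      ArrowSub L' N (Substructure.closure L' (g '' (A : Set M))) B₀ r d) :
    ∀ B : L.Substructure M, (B : Set M).Finite → ∀ r : ℕ, 2 ≤ r →
      ArrowSub L M A B r d := by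
  classical
  intro B hBfin r hr c
  have hr0 : 0 < r := by omega
  obtain ⟨m, aa, -, hrangea⟩ := hAfin.fin_param
  have hAcl : Substructure.closure L (Set.range aa) = A := by
    rw [hrangea, Substructure.closure_eq]
  obtain ⟨p, bb, -, hrangeb⟩ := hBfin.fin_param
  have hBcl : Substructure.closure L (Set.range bb) = B := by
    rw [hrangeb, Substructure.closure_eq]
  have hA'cl : Substructure.closure L' (Set.range (g ∘ aa)) =
      Substructure.closure L' (g '' (A : Set M)) := by
    rw [← hrangea, Set.range_comp]
  set B₀ := Substructure.closure L' (Set.range (g ∘ bb)) with hB₀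
  have hB₀fg : B₀.FG := Substructure.fg_closure (Set.finite_range _)
  set c' : L'.Substructure N → Fin r := fun S =>
    if h : ∃ u : Fin m → N, Substructure.closure L' (Set.range u) = S ∧
        SameQfType L' N (g ∘ aa) u
    then c (Substructure.closure L (Set.range (f ∘ h.choose))) else ⟨0, hr0⟩ with hc'
  obtain ⟨B'', ⟨ε⟩, hcard⟩ := hdeg B₀ hB₀fg r hr c'
  set w : Fin p → B₀ := fun i =>
    ⟨g (bb i), Substructure.subset_closure (Set.mem_range_self (f := g ∘ bb) i)⟩ with hw
  have hgb : g ∘ bb = B₀.subtype ∘ w := rfl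
  set z : Fin p → N := B''.subtype ∘ (ε.symm.toEmbedding ∘ w) with hzdef
  have hz : SameQfType L' N (g ∘ bb) z := by
    rw [hgb]; exact sqt_subtype_equiv ε.symm w
  have hzcl : Substructure.closure L' (Set.range z) = B'' := by
    apply closure_range_map ε.symm w
    rw [← hgb]
  have hb_fz : SameQfType L M bb (f ∘ z) := (hsr.2.2 p bb).trans (hsr.2.1.2 p (g ∘ bb) z hz)
  set B' := Substructure.closure L (Set.range (f ∘ z)) with hB'
  have hB'range : ∀ v ∈ B', ∃ i, v = f (z i) := by
    intro v hv
    obtain ⟨tm, htm⟩ := mem_closure_range_iff.1 hv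
    have h1 : tm.realize bb ∈ B := hBcl ▸ term_realize_mem_closure_range bb tm
    have h2 : tm.realize bb ∈ Set.range bb := by rw [hrangeb]; exact h1
    obtain ⟨i, hi⟩ := h2
    refine ⟨i, ?_⟩
    have h3 := hb_fz.term_eq (t := tm) (t' := Term.var i) hi.symm
    exact htm ▸ h3
  refine ⟨B', ⟨((closureEquivOfSQT hb_fz).comp
    (substructureEquivOfEq hBcl.symm)).symm⟩, ?_⟩
  refine le_trans (Set.ncard_le_ncard ?_ (Set.toFinite _)) hcard
  rintro col ⟨A₂, ⟨hA₂le, ⟨ρ⟩⟩, rfl⟩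
  have haamem : ∀ i, aa i ∈ A := fun i => by show aa i ∈ (A : Set M); rw [← hrangea]; exact Set.mem_range_self i
  set ahat : Fin m → A := fun i => ⟨aa i, haamem i⟩ with hahat
  have haaeq : aa = A.subtype ∘ ahat := rfl
  set atil : Fin m → M := A₂.subtype ∘ (ρ.symm.toEmbedding ∘ ahat) with hatil
  have haaatil : SameQfType L M aa atil := by
    rw [haaeq]; exact sqt_subtype_equiv ρ.symm ahat
  have hA₂cl : Substructure.closure L (Set.range atil) = A₂ := by
    apply closure_range_map ρ.symm ahat
    rw [← haaeq, hAcl]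
  have hexk : ∀ j, ∃ i, atil j = f (z i) := fun j =>
    hB'range (atil j) (hA₂le (ρ.symm (ahat j)).2)
  choose k hk using hexk
  set y : Fin m → N := z ∘ k with hy
  have hatily : atil = f ∘ y := funext hk
  have h1 : SameQfType L M (bb ∘ k) atil := by
    rw [hatily]; exact hb_fz.precomp k
  have haabbk : SameQfType L M aa (bb ∘ k) := haaatil.trans h1.symm
  have hyq : SameQfType L' N (g ∘ aa) y :=
    (hsr.1.2 m aa (bb ∘ k) haabbk).trans (hz.precomp k)
  set S := Substructure.closure L' (Set.range y) with hS
  have hSle : S ≤ B'' := by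
    rw [hS, Substructure.closure_le]
    rintro _ ⟨j, rfl⟩
    rw [← hzcl]
    exact Substructure.subset_closure (Set.mem_range_self (f := z) (k j))
  have hSiso : Nonempty (S ≃[L'] Substructure.closure L' (g '' (A : Set M))) :=
    ⟨((closureEquivOfSQT hyq).comp (substructureEquivOfEq hA'cl.symm)).symm⟩
  refine ⟨S, ⟨hSle, hSiso⟩, ?_⟩
  have hex : ∃ u : Fin m → N, Substructure.closure L' (Set.range u) = S ∧
      SameQfType L' N (g ∘ aa) u := ⟨y, rfl, hyq⟩
  have hchoose : hex.choose = y := by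
    apply tuple_eq_of_sqt_of_rigid hrigid
    · exact (hex.choose_spec.2.symm).trans hyq
    · rw [hex.choose_spec.1, hS]
  show c' S = c A₂
  rw [hc']
  simp only []
  rw [dif_pos hex, hchoose, ← hatily, hA₂cl]
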